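/- Suppose the set D^c = Z^d \ D is finite, with |D^c| = M, and let α ∈ (0,1). Then there exist constants a' > 0 and b' > 0 such that for all k ≥ 1, P_o( l_k(D^c) ≥ (1-α)k ) ≤ a' e^{-b' k^{1/4}}, where l_k(D^c) is the total local time spent in D^c strictly before time k by the simple random walk started at the origin. -/

import Mathlib

open MeasureTheory ProbabilityTheory
open scoped ENNReal

/-- The `j`-th unit step in `ℤ^d`: for `j < d` it is `+e_j`, and for `d ≤ j < 2d` it is
`-e_{j-d}`.  When `j` is uniform on `{0, …, 2d-1}`, this is a uniformly chosen nearest-neighbour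
step. -/
def dirVec (d : ℕ) (j : ℕ) : Fin d → ℤ := fun i =>
  if j < d then (if (i : ℕ) = j then 1 else 0) else (if (i : ℕ) + d = j then -1 else 0)

/-- The simple random walk on `ℤ^d` started at `x`, driven by the seed sequence `u`: at step `n`
it moves by `dirVec d (u n)`.  When the seeds are i.i.d. uniform on `{0, …, 2d-1}`, this is the
discrete-time simple random walk. -/
def srw (d : ℕ) (x : Fin d → ℤ) (u : ℕ → ℕ) : ℕ → Fin d → ℤ
  | 0 => x
  | n + 1 => srw d x u n + dirVec d (u n)

/-- The local time `l_k(z)`: the number of visits to `z` strictly before time `k`. -/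
def locTime (d : ℕ) (x : Fin d → ℤ) (u : ℕ → ℕ) (k : ℕ) (z : Fin d → ℤ) : ℕ :=
  ((Finset.range k).filter (fun j => srw d x u j = z)).card

open Classical in
/-- The product `∏_{z ∈ D} (2d/(2d+1))^{l_k(z)}`, valued in `[0,∞]`; since `l_k(z) = 0` for all
but finitely many `z`, it is the corresponding finite product over the sites of `D` visited
strictly before time `k`. -/
noncomputable def prodD (d : ℕ) (D : Set (Fin d → ℤ)) (x : Fin d → ℤ) (u : ℕ → ℕ)
    (k : ℕ) : ℝ≥0∞ :=
  ∏ z ∈ ((Finset.range k).image (fun j => srw d x u j)).filter (fun z => z ∈ D),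
    (((2 * d : ℕ) : ℝ≥0∞) / ((2 * d + 1 : ℕ) : ℝ≥0∞)) ^ (locTime d x u k z)

open Classical in
/-- The killed random walk associated to the set `D` of dissipative sites, started at `x` and
driven by the seed sequence `w`; `none` is the cemetery state.  From a site not in `D` it moves
by the uniform step `w n % (2d)`; from a site in `D`, with `r = w n % (2d+1)` it is killed if
`r = 2d` and otherwise moves by step `r`.  When the seeds are i.i.d. uniform on
`{0, …, 2d(2d+1) - 1}`, from a site in `D` the walk moves to each neighbour with probability
`1/(2d+1)` and is killed with probability `1/(2d+1)`, and from a site not in `D` it moves to each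
neighbour with probability `1/(2d)`. -/
noncomputable def kwalk (d : ℕ) (D : Set (Fin d → ℤ)) (x : Fin d → ℤ) (w : ℕ → ℕ) :
    ℕ → Option (Fin d → ℤ)
  | 0 => some x
  | n + 1 =>
    match kwalk d D x w n with
    | none => none
    | some y =>
      if y ∈ D then
        (if w n % (2 * d + 1) = 2 * d then none
         else some (y + dirVec d (w n % (2 * d + 1))))
      else some (y + dirVec d (w n % (2 * d)))

/-- The survival time `T̂` of the killed random walk: the step at which it is killed, as an
element of `[0,∞]` (it equals `∞` if the walk is never killed). -/
noncomputable def killTime (d : ℕ) (D : Set (Fin d → ℤ)) (x : Fin d → ℤ) (w : ℕ → ℕ) : ℝ≥0∞ :=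
  sInf {t : ℝ≥0∞ | ∃ k : ℕ, t = (k : ℝ≥0∞) ∧ kwalk d D x w k = none}

/-- The hitting (return) time `τ(D) = inf {k ≥ 1 : X_k ∈ D}` of the set `D` by the simple random
walk, as an element of `[0,∞]` (it equals `∞` if `D` is never hit at a positive time). -/
noncomputable def retTime (d : ℕ) (D : Set (Fin d → ℤ)) (x : Fin d → ℤ) (u : ℕ → ℕ) : ℝ≥0∞ :=
  sInf {t : ℝ≥0∞ | ∃ k : ℕ, t = (k : ℝ≥0∞) ∧ 1 ≤ k ∧ srw d x u k ∈ D}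

section AuxLemmas

open Finset

lemma srw_congr (d : ℕ) (x : Fin d → ℤ) {u u' : ℕ → ℕ} :
    ∀ n : ℕ, (∀ m, m < n → u m = u' m) → srw d x u n = srw d x u' n
  | 0, _ => rfl
  | n + 1, h => by
    show srw d x u n + dirVec d (u n) = srw d x u' n + dirVec d (u' n)
    rw [srw_congr d x n (fun m hm => h m (Nat.lt_succ_of_lt hm)), h n (Nat.lt_succ_self n)]

def extSeed {n B : ℕ} (v : Fin n → Fin B) : ℕ → ℕ :=
  fun m => if h : m < n then (v ⟨m, h⟩ : ℕ) else 0

lemma extSeed_snoc {n B : ℕ} (w : Fin n → Fin B) (b : Fin B) {m : ℕ} (hm : m < n) :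
    extSeed (Fin.snoc w b : Fin (n+1) → Fin B) m = extSeed w m := by
  have h1 : m < n + 1 := Nat.lt_succ_of_lt hm
  simp only [extSeed, dif_pos hm, dif_pos h1]
  congr 1
  have h2 : (⟨m, h1⟩ : Fin (n+1)) = Fin.castSucc ⟨m, hm⟩ := rfl
  rw [h2, Fin.snoc_castSucc]

lemma extSeed_snoc_last {n B : ℕ} (w : Fin n → Fin B) (b : Fin B) :
    extSeed (Fin.snoc w b : Fin (n+1) → Fin B) n = (b : ℕ) := by
  simp only [extSeed, dif_pos (Nat.lt_succ_self n)]
  congr 1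
  have h2 : (⟨n, Nat.lt_succ_self n⟩ : Fin (n+1)) = Fin.last n := rfl
  rw [h2, Fin.snoc_last]

lemma srw_extSeed_snoc (d : ℕ) (x : Fin d → ℤ) {n B : ℕ} (w : Fin n → Fin B) (b : Fin B)
    {j : ℕ} (hj : j ≤ n) :
    srw d x (extSeed (Fin.snoc w b : Fin (n+1) → Fin B)) j = srw d x (extSeed w) j :=
  srw_congr d x j (fun m hm => extSeed_snoc w b (lt_of_lt_of_le hm hj))

open Classical in
lemma sum_weight_le (d : ℕ) (D : Set (Fin d → ℤ)) (g : (Fin d → ℤ) → ℝ)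
    (θ η : ℝ) (hg0 : g 0 ≤ 1) (hgpos : ∀ y, 0 < g y)
    (hstep : ∀ y : Fin d → ℤ, (∑ b : Fin (2*d), g (y + dirVec d (b : ℕ)))
        ≤ ((2*d : ℕ) : ℝ) * Real.exp η * (if y ∈ Dᶜ then Real.exp (-θ) else 1) * g y) :
    ∀ k : ℕ, (∑ v : Fin k → Fin (2*d),
        Real.exp (θ * (((Finset.range k).filter
            (fun j => srw d 0 (extSeed v) j ∈ Dᶜ)).card : ℝ))
          * g (srw d 0 (extSeed v) k))
      ≤ ((2*d : ℕ) : ℝ)^k * Real.exp (η * k) := by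
  intro k
  induction k with
  | zero =>
    simp only [Finset.range_zero, Finset.filter_empty, Finset.card_empty, Nat.cast_zero,
      mul_zero, Real.exp_zero, one_mul, pow_zero]
    have h1 : (∑ v : Fin 0 → Fin (2*d), g (srw d 0 (extSeed v) 0))
        = ∑ _v : Fin 0 → Fin (2*d), g 0 := rfl
    rw [h1, Finset.sum_const, Finset.card_univ]
    have hcard1 : Fintype.card (Fin 0 → Fin (2*d)) = 1 := by
      rw [Fintype.card_fun]; simp
    rw [hcard1, one_smul]
    exact hg0
  | succ k ih =>
    set W : (Fin (k+1) → Fin (2*d)) → ℝ := fun v =>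
      Real.exp (θ * (((Finset.range (k+1)).filter
            (fun j => srw d 0 (extSeed v) j ∈ Dᶜ)).card : ℝ))
          * g (srw d 0 (extSeed v) (k+1)) with hW
    have hequiv : (∑ v : Fin (k+1) → Fin (2*d), W v)
        = ∑ p : Fin (2*d) × (Fin k → Fin (2*d)), W (Fin.snoc p.2 p.1) := by
      rw [← Equiv.sum_comp (Fin.snocEquiv (fun _ => Fin (2*d))) W]
      rfl
    rw [hequiv, Fintype.sum_prod_type, Finset.sum_comm]
    have key : ∀ w : Fin k → Fin (2*d),
        (∑ b : Fin (2*d), W (Fin.snoc w b))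
        ≤ ((2*d : ℕ) : ℝ) * Real.exp η *
          (Real.exp (θ * (((Finset.range k).filter
              (fun j => srw d 0 (extSeed w) j ∈ Dᶜ)).card : ℝ))
            * g (srw d 0 (extSeed w) k)) := by
      intro w
      set x := srw d 0 (extSeed w) k with hx
      set L : ℕ := ((Finset.range k).filter (fun j => srw d 0 (extSeed w) j ∈ Dᶜ)).card with hL
      have hcard : ∀ b : Fin (2*d),
          (((Finset.range (k+1)).filter
            (fun j => srw d 0 (extSeed (Fin.snoc w b : Fin (k+1) → Fin (2*d))) j ∈ Dᶜ)).card : ℝ)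
          = (L : ℝ) + (if x ∈ Dᶜ then 1 else 0) := by
        intro b
        rw [Finset.card_filter, Finset.sum_range_succ, srw_extSeed_snoc d 0 w b (le_refl k)]
        have h3 : ∀ j ∈ Finset.range k,
            (if srw d 0 (extSeed (Fin.snoc w b : Fin (k+1) → Fin (2*d))) j ∈ Dᶜ then 1 else 0)
            = (if srw d 0 (extSeed w) j ∈ Dᶜ then (1:ℕ) else 0) := by
          intro j hj
          rw [srw_extSeed_snoc d 0 w b (le_of_lt (Finset.mem_range.1 hj))]
        rw [Finset.sum_congr rfl h3, ← Finset.card_filter]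
        push_cast [hL]
        split <;> simp
      have hpos : ∀ b : Fin (2*d), srw d 0 (extSeed (Fin.snoc w b : Fin (k+1) → Fin (2*d))) (k+1)
          = x + dirVec d (b : ℕ) := by
        intro b
        show srw d 0 (extSeed (Fin.snoc w b : Fin (k+1) → Fin (2*d))) k
            + dirVec d (extSeed (Fin.snoc w b : Fin (k+1) → Fin (2*d)) k) = _
        rw [srw_extSeed_snoc d 0 w b (le_refl k), extSeed_snoc_last]
      have hWb : ∀ b : Fin (2*d), W (Fin.snoc w b)
          = Real.exp (θ * (L:ℝ)) * Real.exp (θ * (if x ∈ Dᶜ then 1 else 0))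
            * g (x + dirVec d (b : ℕ)) := by
        intro b
        rw [hW]
        simp only []
        rw [hcard b, hpos b, mul_add, Real.exp_add]
      calc (∑ b : Fin (2*d), W (Fin.snoc w b))
          = Real.exp (θ * (L:ℝ)) * Real.exp (θ * (if x ∈ Dᶜ then 1 else 0))
            * (∑ b : Fin (2*d), g (x + dirVec d (b : ℕ))) := by
            rw [Finset.mul_sum]; exact Finset.sum_congr rfl (fun b _ => hWb b)
        _ ≤ Real.exp (θ * (L:ℝ)) * Real.exp (θ * (if x ∈ Dᶜ then 1 else 0))
            * (((2*d : ℕ) : ℝ) * Real.exp η * (if x ∈ Dᶜ then Real.exp (-θ) else 1) * g x) := by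
            apply mul_le_mul_of_nonneg_left (hstep x) (by positivity)
        _ = ((2*d : ℕ) : ℝ) * Real.exp η * (Real.exp (θ * (L:ℝ)) * g x) := by
            by_cases hxD : x ∈ Dᶜ
            · simp only [if_pos hxD]
              have h1 : Real.exp (θ * 1) * Real.exp (-θ) = 1 := by
                rw [← Real.exp_add]; simp
              linear_combination (Real.exp (θ * (L:ℝ)) * ((2*d : ℕ) : ℝ) * Real.exp η * g x) * h1
            · simp only [if_neg hxD]
              rw [mul_zero, Real.exp_zero]
              ring
    calc (∑ w : Fin k → Fin (2*d), ∑ b : Fin (2*d), W (Fin.snoc w b))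
        ≤ ∑ w : Fin k → Fin (2*d), ((2*d : ℕ) : ℝ) * Real.exp η *
          (Real.exp (θ * (((Finset.range k).filter
              (fun j => srw d 0 (extSeed w) j ∈ Dᶜ)).card : ℝ))
            * g (srw d 0 (extSeed w) k)) := Finset.sum_le_sum (fun w _ => key w)
      _ = ((2*d : ℕ) : ℝ) * Real.exp η * ∑ w : Fin k → Fin (2*d),
          (Real.exp (θ * (((Finset.range k).filter
              (fun j => srw d 0 (extSeed w) j ∈ Dᶜ)).card : ℝ))
            * g (srw d 0 (extSeed w) k)) := by rw [← Finset.mul_sum]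
      _ ≤ ((2*d : ℕ) : ℝ) * Real.exp η * (((2*d : ℕ) : ℝ)^k * Real.exp (η * k)) := by
          apply mul_le_mul_of_nonneg_left ih (by positivity)
      _ = ((2*d : ℕ) : ℝ)^(k+1) * Real.exp (η * ((k:ℝ)+1)) := by
          rw [pow_succ]
          rw [mul_add, Real.exp_add, mul_one]
          ring
      _ = ((2*d : ℕ) : ℝ)^(k+1) * Real.exp (η * ((k+1 : ℕ) : ℝ)) := by push_cast; ring

set_option maxHeartbeats 2000000 in
lemma exists_F (d R : ℕ) (hd : 1 ≤ d) (α : ℝ) (hα0 : 0 < α) (hα1 : α < 1) :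
    ∃ η θ : ℝ, 0 < η ∧ η ≤ θ ∧ 2 * η ≤ θ * (1 - α) ∧
      ∃ F : ℕ → ℝ,
        F 0 = 1 ∧
        (∀ t, 1/2 ≤ F t) ∧ (∀ t, F t ≤ 1) ∧ (∀ t, F (t+1) ≤ F t) ∧
        (∀ t : ℕ, t ≤ R →
          ((2*d : ℕ) : ℝ) * F t - 2 * F t + F (t+1) + F (t-1)
            ≤ ((2*d : ℕ) : ℝ) * Real.exp (η - θ) * F t) ∧
        (∀ t : ℕ, ((2*d : ℕ) : ℝ) * F t - 2 * F t + F (t+1) + F (t-1)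
            ≤ ((2*d : ℕ) : ℝ) * Real.exp η * F t) := by
  obtain ⟨δ, hδdef⟩ : ∃ δ:ℝ, δ = 1 - α := ⟨_, rfl⟩
  have hδ0 : 0 < δ := by rw [hδdef]; linarith
  have hδ1 : δ ≤ 1 := by rw [hδdef]; linarith
  obtain ⟨Rr, hRr⟩ : ∃ Rr:ℝ, Rr = (R:ℝ) := ⟨_, rfl⟩
  have hRr0 : (0:ℝ) ≤ Rr := by rw [hRr]; positivity
  have hdR : (0:ℝ) < Rr + 2 := by linarith
  obtain ⟨κ, hκdef⟩ : ∃ κ:ℝ, κ = δ / (10 * (Rr+2)^2) := ⟨_, rfl⟩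
  have hκ0 : 0 < κ := by rw [hκdef]; positivity
  obtain ⟨β, hβdef⟩ : ∃ β:ℝ, β = δ * κ / 4 := ⟨_, rfl⟩
  have hβ0 : 0 < β := by rw [hβdef]; positivity
  have hd0 : (0:ℝ) < d := by exact_mod_cast hd
  obtain ⟨η, hηdef⟩ : ∃ η:ℝ, η = β / d := ⟨_, rfl⟩
  have hη0 : 0 < η := by rw [hηdef]; positivity
  obtain ⟨θ, hθdef⟩ : ∃ θ:ℝ, θ = η + κ / (2*d) := ⟨_, rfl⟩
  have hθη : θ - η = κ / (2*d) := by rw [hθdef]; ring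
  have h2d0 : (0:ℝ) < ((2*d : ℕ) : ℝ) := by push_cast; linarith
  have h2dκ : ((2*d : ℕ) : ℝ) * (θ - η) = κ := by
    rw [hθη]; push_cast; field_simp
  have hβd : ((d:ℝ)) * η = β := by rw [hηdef]; field_simp
  refine ⟨η, θ, hη0, by nlinarith [hθη, hκ0], ?_, ?_⟩
  · show 2 * η ≤ θ * (1 - α)
    rw [← hδdef]
    have h1 : 2 * η = δ * κ / (2 * d) := by
      rw [hηdef, hβdef]; field_simp; ring
    have h2 : θ * δ = δ * η + δ * κ / (2*d) := by rw [hθdef]; ring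
    have h3 : 0 < δ * η := mul_pos hδ0 hη0
    linarith
  obtain ⟨N, hNle, hNlt⟩ : ∃ N : ℕ, 4*(Rr+1)/δ ≤ (N:ℝ) ∧ (N:ℝ) ≤ 4*(Rr+1)/δ + 1 :=
    ⟨⌈4*(Rr+1)/δ⌉₊, Nat.le_ceil _, le_of_lt (Nat.ceil_lt_add_one (by positivity))⟩
  obtain ⟨σ, hσdef⟩ : ∃ σ : ℕ → ℝ, σ = fun t =>
    if t ≤ R then κ*((t:ℝ)+1) else max 0 (κ*(Rr+1) - β*((t:ℝ)-Rr)) := ⟨_, rfl⟩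
  have hσ_nonneg : ∀ t, 0 ≤ σ t := by
    intro t; rw [hσdef]; dsimp only; split
    · positivity
    · exact le_max_left _ _
  have hσ_le : ∀ t, σ t ≤ κ*(Rr+1) := by
    intro t; rw [hσdef]; dsimp only; split
    · rename_i h
      have : (t:ℝ) ≤ Rr := by rw [hRr]; exact_mod_cast h
      nlinarith
    · rename_i h
      have : Rr ≤ (t:ℝ) := by
        rw [hRr]; exact_mod_cast le_of_lt (Nat.lt_of_not_le h)
      apply max_le (by positivity)
      nlinarith
  have hσ_zero : ∀ t, R + N < t → σ t = 0 := by
    intro t ht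
    have h1 : ¬ (t ≤ R) := by omega
    rw [hσdef]; dsimp only; rw [if_neg h1]
    have htR : (R:ℝ) + N + 1 ≤ (t:ℝ) := by exact_mod_cast ht
    rw [← hRr] at htR
    have : κ*(Rr+1) - β*((t:ℝ)-Rr) ≤ 0 := by
      have hb : β * (4*(Rr+1)/δ) = κ * (Rr + 1) := by
        rw [hβdef, hκdef]; field_simp
      have h7 : (4*(Rr+1)/δ) ≤ (t:ℝ) - Rr := by linarith
      have h8 : β * (4*(Rr+1)/δ) ≤ β*((t:ℝ)-Rr) :=
        mul_le_mul_of_nonneg_left h7 (le_of_lt hβ0)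
      rw [hb] at h8
      linarith
    simp [max_eq_left this]
  have hsum_le : ∀ t, (∑ s ∈ Finset.range t, σ s) ≤ ((R:ℝ)+N+1) * (κ*(Rr+1)) := by
    intro t
    have step1 : (∑ s ∈ Finset.range t, σ s)
        ≤ ∑ s ∈ Finset.range t, (if s < R+N+1 then κ*(Rr+1) else 0) := by
      apply Finset.sum_le_sum
      intro s _
      split
      · exact hσ_le s
      · rename_i h; rw [hσ_zero s (by omega)]
    have step2 : (∑ s ∈ Finset.range t, (if s < R+N+1 then κ*(Rr+1) else 0))
        = ∑ s ∈ (Finset.range t).filter (fun s => s < R+N+1), κ*(Rr+1) := by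
      rw [Finset.sum_filter]
    have step3 : (∑ s ∈ (Finset.range t).filter (fun s => s < R+N+1), κ*(Rr+1))
        ≤ ((R:ℝ)+N+1) * (κ*(Rr+1)) := by
      rw [Finset.sum_const]
      have hsub : (Finset.range t).filter (fun s => s < R+N+1) ⊆ Finset.range (R+N+1) := by
        intro s hs
        simp only [Finset.mem_filter, Finset.mem_range] at *
        exact hs.2
      have hcard : ((Finset.range t).filter (fun s => s < R+N+1)).card ≤ R+N+1 := by
        simpa using Finset.card_le_card hsub
      rw [nsmul_eq_mul]
      have h5 : (0:ℝ) ≤ κ*(Rr+1) := by positivity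
      have hc : (((Finset.range t).filter (fun s => s < R+N+1)).card : ℝ) ≤ ((R:ℝ)+N+1) := by
        exact_mod_cast hcard
      nlinarith
    linarith
  have hhalf : ((R:ℝ)+N+1) * (κ*(Rr+1)) ≤ 1/2 := by
    have hN := hNlt
    have e1 : ((R:ℝ)+N+1) ≤ Rr + 2 + 4*(Rr+1)/δ := by rw [← hRr]; linarith
    have e2 : κ*(Rr+1) ≤ κ*(Rr+2) := by nlinarith
    have e3 : (0:ℝ) ≤ κ*(Rr+1) := by positivity
    have e4 : ((R:ℝ)+N+1) * (κ*(Rr+1)) ≤ (Rr + 2 + 4*(Rr+1)/δ) * (κ*(Rr+2)) := by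
      have h5 : (0:ℝ) ≤ Rr + 2 + 4*(Rr+1)/δ := by positivity
      have h6 : ((R:ℝ)+N+1) ≥ 0 := by positivity
      nlinarith
    have e5 : (Rr + 2 + 4*(Rr+1)/δ) * (κ*(Rr+2)) = δ/10 + 4*(Rr+1)/(10*(Rr+2)) := by
      rw [hκdef]; field_simp
    have e6 : 4*(Rr+1)/(10*(Rr+2)) ≤ 4/10 := by
      rw [div_le_div_iff₀ (by positivity) (by norm_num)]
      nlinarith
    linarith
  obtain ⟨F, hFdef⟩ : ∃ F : ℕ → ℝ, F = fun t => 1 - ∑ s ∈ Finset.range t, σ s := ⟨_, rfl⟩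
  have hF0 : F 0 = 1 := by simp [hFdef]
  have hFsucc : ∀ t, F (t+1) = F t - σ t := by
    intro t; rw [hFdef]; dsimp only; rw [Finset.sum_range_succ]; ring
  have hFle1 : ∀ t, F t ≤ 1 := by
    intro t; rw [hFdef]; dsimp only
    have : 0 ≤ ∑ s ∈ Finset.range t, σ s := Finset.sum_nonneg (fun s _ => hσ_nonneg s)
    linarith
  have hFhalf : ∀ t, 1/2 ≤ F t := by
    intro t; rw [hFdef]; dsimp only
    have := hsum_le t
    linarith [hhalf]
  have hFmono : ∀ t, F (t+1) ≤ F t := by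
    intro t; rw [hFsucc t]; linarith [hσ_nonneg t]
  have hmaxle : ∀ a : ℝ, max 0 a ≤ β + max 0 (a - β) := by
    intro a
    apply max_le
    · positivity
    · linarith [le_max_right (0:ℝ) (a - β)]
  have hσslab : ∀ t, t ≤ R → σ t = κ*((t:ℝ)+1) := by
    intro t ht; rw [hσdef]; dsimp only; rw [if_pos ht]
  have hdrop : ∀ t, 1 ≤ t → σ (t-1) - σ t ≤ β := by
    intro t ht
    obtain ⟨s, rfl⟩ : ∃ s, t = s + 1 := ⟨t - 1, by omega⟩
    simp only [Nat.add_sub_cancel]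
    by_cases h1 : s + 1 ≤ R
    · rw [hσslab _ (by omega), hσslab _ h1]
      push_cast
      nlinarith
    · have hσs1 : σ (s+1) = max 0 (κ*(Rr+1) - β*(((s+1:ℕ):ℝ)-Rr)) := by
        rw [hσdef]; dsimp only; rw [if_neg h1]
      by_cases h2 : s ≤ R
      · have hsR : s = R := by omega
        rw [hσslab _ h2, hσs1]
        have hc : κ*(Rr+1) - β*(((s+1:ℕ):ℝ)-Rr) = κ*(Rr+1) - β := by
          rw [hRr, hsR]; push_cast; ring
        rw [hc]
        have hmr := le_max_right (0:ℝ) (κ*(Rr+1) - β)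
        have hs' : κ*((s:ℝ)+1) = κ*(Rr+1) := by rw [hRr, hsR]
        rw [hs']
        linarith
      · have hσs : σ s = max 0 (κ*(Rr+1) - β*((s:ℝ)-Rr)) := by
          rw [hσdef]; dsimp only; rw [if_neg h2]
        rw [hσs, hσs1]
        have harg : (κ*(Rr+1) - β*((s:ℝ)-Rr)) - β = κ*(Rr+1) - β*(((s+1:ℕ):ℝ)-Rr) := by
          push_cast; ring
        have := hmaxle (κ*(Rr+1) - β*((s:ℝ)-Rr))
        rw [harg] at this
        linarith
  have hconc : ∀ t, t ≤ R → F (t+1) + F (t-1) ≤ 2 * F t - κ := by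
    intro t ht
    match t with
    | 0 =>
      simp only [Nat.zero_sub]
      rw [hFsucc 0, hσslab 0 ht]
      push_cast
      linarith
    | (s+1) =>
      simp only [Nat.add_sub_cancel]
      have hFs : F (s+1) = F s - σ s := hFsucc s
      have hB : σ s = κ*((s:ℝ)+1) := hσslab _ (by omega)
      rw [hFsucc (s+1), hσslab _ ht]
      push_cast
      push_cast at hFs hB
      linarith
  have hconv : ∀ t, F (t+1) + F (t-1) ≤ 2 * F t + β := by
    intro t
    match t with
    | 0 =>
      simp only [Nat.zero_sub]
      rw [hFsucc 0]
      linarith [hσ_nonneg 0, hβ0]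
    | (s+1) =>
      simp only [Nat.add_sub_cancel]
      have hFs : F (s+1) = F s - σ s := hFsucc s
      rw [hFsucc (s+1)]
      have := hdrop (s+1) (by omega)
      simp only [Nat.add_sub_cancel] at this
      linarith
  refine ⟨F, hF0, hFhalf, hFle1, hFmono, ?_, ?_⟩
  · intro t ht
    have h1 := hconc t ht
    have hexp : (η - θ) + 1 ≤ Real.exp (η - θ) := Real.add_one_le_exp _
    have hF1 := hFle1 t
    have hF2 := hFhalf t
    have hθη0 : 0 ≤ θ - η := by rw [hθη]; positivity
    nlinarith [h2dκ, mul_le_mul_of_nonneg_left hexp (le_of_lt h2d0),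
      mul_le_mul_of_nonneg_left hF1 (mul_nonneg (le_of_lt h2d0) hθη0)]
  · intro t
    have h1 := hconv t
    have hexp : η + 1 ≤ Real.exp η := Real.add_one_le_exp _
    have hF2 := hFhalf t
    have h2d : ((2*d : ℕ) : ℝ) = 2 * (d:ℝ) := by push_cast; ring
    nlinarith [hβd, mul_le_mul_of_nonneg_left hexp (le_of_lt h2d0),
      mul_le_mul_of_nonneg_left hF2 (mul_nonneg (le_of_lt h2d0) (le_of_lt hη0))]

lemma bridge (dd : ℝ) (F : ℕ → ℝ) (hmono : ∀ t, F (t+1) ≤ F t) (c : ℝ)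
    (P : ℕ → Prop)
    (hK : ∀ t : ℕ, P t → dd * F t - 2 * F t + F (t+1) + F (t-1) ≤ c * F t) :
    ∀ z : ℤ, P z.natAbs →
      dd * F z.natAbs - 2 * F z.natAbs + F (z+1).natAbs + F (z-1).natAbs
        ≤ c * F z.natAbs := by
  intro z hz
  match z with
  | Int.ofNat 0 =>
    have e1 : ((Int.ofNat 0 : ℤ) + 1).natAbs = 1 := by decide
    have e2 : ((Int.ofNat 0 : ℤ) - 1).natAbs = 1 := by decide
    have e3 : (Int.ofNat 0 : ℤ).natAbs = 0 := by decide
    rw [e1, e2, e3] at *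
    have := hK 0 hz
    simp only [Nat.zero_sub] at this
    linarith [hmono 0]
  | Int.ofNat (m+1) =>
    have e1 : ((Int.ofNat (m+1) : ℤ) + 1).natAbs = m + 2 := by
      rw [Int.ofNat_eq_coe]; omega
    have e2 : ((Int.ofNat (m+1) : ℤ) - 1).natAbs = m := by
      rw [Int.ofNat_eq_coe]; omega
    have e3 : (Int.ofNat (m+1) : ℤ).natAbs = m + 1 := by
      rw [Int.ofNat_eq_coe]; omega
    rw [e1, e2, e3] at *
    have := hK (m+1) hz
    simp only [Nat.add_sub_cancel] at this
    linarith
  | Int.negSucc n =>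
    have e1 : ((Int.negSucc n : ℤ) + 1).natAbs = n := by
      rw [Int.negSucc_eq]; omega
    have e2 : ((Int.negSucc n : ℤ) - 1).natAbs = n + 2 := by
      rw [Int.negSucc_eq]; omega
    have e3 : (Int.negSucc n : ℤ).natAbs = n + 1 := rfl
    rw [e1, e2, e3] at *
    have := hK (n+1) hz
    simp only [Nat.add_sub_cancel] at this
    linarith

open Classical in
lemma g_step (d : ℕ) (hd : 1 ≤ d) (R : ℕ) (D : Set (Fin d → ℤ))
    (hslab : ∀ z ∈ Dᶜ, (z ⟨0, hd⟩).natAbs ≤ R)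
    (F : ℕ → ℝ) (η θ : ℝ)
    (hmono : ∀ t, F (t+1) ≤ F t)
    (hK1 : ∀ t : ℕ, t ≤ R →
      ((2*d : ℕ) : ℝ) * F t - 2*F t + F (t+1) + F (t-1)
        ≤ ((2*d : ℕ) : ℝ) * Real.exp (η - θ) * F t)
    (hK2 : ∀ t : ℕ, ((2*d : ℕ) : ℝ) * F t - 2*F t + F (t+1) + F (t-1)
        ≤ ((2*d : ℕ) : ℝ) * Real.exp η * F t) :
    ∀ y : Fin d → ℤ, (∑ b : Fin (2*d), F (((y + dirVec d (b:ℕ)) ⟨0, hd⟩).natAbs))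
      ≤ ((2*d : ℕ) : ℝ) * Real.exp η * (if y ∈ Dᶜ then Real.exp (-θ) else 1)
        * F ((y ⟨0, hd⟩).natAbs) := by
  intro y
  set i0 : Fin d := ⟨0, hd⟩ with hi0
  have hdlt : d < 2*d := by omega
  have h0lt : 0 < 2*d := by omega
  set b0 : Fin (2*d) := ⟨0, h0lt⟩ with hb0
  set bd : Fin (2*d) := ⟨d, hdlt⟩ with hbd
  have hne : bd ≠ b0 := by
    intro h
    have : d = 0 := congrArg Fin.val h
    omega
  have e0 : (y + dirVec d ((b0:ℕ))) i0 = y i0 + 1 := by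
    show y i0 + dirVec d 0 i0 = y i0 + 1
    congr 1
    simp only [dirVec, hi0]
    rw [if_pos (by omega : (0:ℕ) < d)]
    simp
  have ed : (y + dirVec d ((bd:ℕ))) i0 = y i0 - 1 := by
    show y i0 + dirVec d d i0 = y i0 - 1
    have : dirVec d d i0 = -1 := by
      simp only [dirVec, hi0]
      rw [if_neg (by omega : ¬ (d < d))]
      simp
    rw [this]; ring
  have eo : ∀ b : Fin (2*d), b ≠ b0 → b ≠ bd → (y + dirVec d (b:ℕ)) i0 = y i0 := by
    intro b h1 h2
    show y i0 + dirVec d (b:ℕ) i0 = y i0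
    have hv0 : (b:ℕ) ≠ 0 := fun h => h1 (Fin.ext h)
    have hvd : (b:ℕ) ≠ d := fun h => h2 (Fin.ext h)
    have : dirVec d (b:ℕ) i0 = 0 := by
      simp only [dirVec, hi0]
      split
      · rw [if_neg (by omega)]
      · rw [if_neg (by omega)]
    rw [this, add_zero]
  have hsum : (∑ b : Fin (2*d), F (((y + dirVec d (b:ℕ)) i0).natAbs))
      = F ((y i0 + 1).natAbs) + (F ((y i0 - 1).natAbs)
        + (((2*d:ℕ):ℝ) - 2) * F ((y i0).natAbs)) := by
    rw [← Finset.add_sum_erase _ _ (Finset.mem_univ b0)]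
    rw [← Finset.add_sum_erase _ _ (Finset.mem_erase.2 ⟨hne, Finset.mem_univ bd⟩)]
    rw [e0, ed]
    congr 1
    congr 1
    have h3 : ∀ b ∈ (Finset.univ.erase b0).erase bd, F (((y + dirVec d (b:ℕ)) i0).natAbs)
        = F ((y i0).natAbs) := by
      intro b hb
      rw [eo b (Finset.mem_erase.1 (Finset.mem_erase.1 hb).2).1 (Finset.mem_erase.1 hb).1]
    rw [Finset.sum_congr rfl h3, Finset.sum_const, nsmul_eq_mul]
    congr 1
    have hcc : ((Finset.univ.erase b0).erase bd).card = 2*d - 2 := by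
      rw [Finset.card_erase_of_mem (Finset.mem_erase.2 ⟨hne, Finset.mem_univ bd⟩),
        Finset.card_erase_of_mem (Finset.mem_univ b0), Finset.card_univ, Fintype.card_fin]
      omega
    rw [hcc]
    push_cast [Nat.cast_sub (by omega : 2 ≤ 2*d)]
    ring
  rw [hsum]
  by_cases hy : y ∈ Dᶜ
  · rw [if_pos hy]
    have ht : (y i0).natAbs ≤ R := hslab y hy
    have hbr := bridge ((2*d:ℕ):ℝ) F hmono (((2*d : ℕ) : ℝ) * Real.exp (η - θ))
      (fun t => t ≤ R) hK1 (y i0) ht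
    have hee : Real.exp η * Real.exp (-θ) = Real.exp (η - θ) := by
      rw [← Real.exp_add]; ring_nf
    calc F ((y i0 + 1).natAbs) + (F ((y i0 - 1).natAbs)
          + (((2*d:ℕ):ℝ) - 2) * F ((y i0).natAbs))
        = ((2*d:ℕ):ℝ) * F ((y i0).natAbs) - 2 * F ((y i0).natAbs)
          + F ((y i0 + 1).natAbs) + F ((y i0 - 1).natAbs) := by ring
      _ ≤ ((2*d : ℕ) : ℝ) * Real.exp (η - θ) * F ((y i0).natAbs) := hbr
      _ = ((2*d : ℕ) : ℝ) * Real.exp η * Real.exp (-θ) * F ((y i0).natAbs) := by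
          rw [← hee]; ring
  · rw [if_neg hy]
    have hbr := bridge ((2*d:ℕ):ℝ) F hmono (((2*d : ℕ) : ℝ) * Real.exp η)
      (fun _ => True) (fun t _ => hK2 t) (y i0) trivial
    calc F ((y i0 + 1).natAbs) + (F ((y i0 - 1).natAbs)
          + (((2*d:ℕ):ℝ) - 2) * F ((y i0).natAbs))
        = ((2*d:ℕ):ℝ) * F ((y i0).natAbs) - 2 * F ((y i0).natAbs)
          + F ((y i0 + 1).natAbs) + F ((y i0 - 1).natAbs) := by ring
      _ ≤ ((2*d : ℕ) : ℝ) * Real.exp η * F ((y i0).natAbs) := hbr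
      _ = ((2*d : ℕ) : ℝ) * Real.exp η * 1 * F ((y i0).natAbs) := by ring

end AuxLemmas

open Classical in
/-- Suppose `Dᶜ = ℤ^d \ D` is finite and let `α ∈ (0,1)`.  Then there exist
constants `a' > 0` and `b' > 0` such that for all `k ≥ 1`,
`P_o(l_k(Dᶜ) ≥ (1-α)k) ≤ a' e^{-b' k^{1/4}}`, where `l_k(Dᶜ)` is the total local time spent in
`Dᶜ` strictly before time `k` by the simple random walk started at the origin (encoded by i.i.d.
uniform seeds `U` on `(Ω, P)`). -/
theorem local_time_in_finite_compl_large_deviation (d : ℕ) (hd : 1 ≤ d)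
    (D : Set (Fin d → ℤ)) (hD : Dᶜ.Finite) (α : ℝ) (hα0 : 0 < α) (hα1 : α < 1) :
    ∃ a' : ℝ, 0 < a' ∧ ∃ b' : ℝ, 0 < b' ∧
      ∀ (Ω : Type) (_ : MeasurableSpace Ω) (P : Measure Ω), IsProbabilityMeasure P →
        ∀ U : ℕ → Ω → Fin (2 * d),
          (∀ n, Measurable (U n)) →
          iIndepFun U P →
          (∀ n j, P {ω | U n ω = j} = ((2 * d : ℕ) : ℝ≥0∞)⁻¹) →
          ∀ k : ℕ, 1 ≤ k →
            P {ω | (1 - α) * k ≤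
                (((Finset.range k).filter
                    (fun j => srw d 0 (fun m => (U m ω : ℕ)) j ∈ Dᶜ)).card : ℝ)} ≤
              ENNReal.ofReal (a' * Real.exp (-b' * (k : ℝ) ^ ((1 : ℝ) / 4))) := by
  classical
  set R : ℕ := hD.toFinset.sup (fun z => (z ⟨0, hd⟩).natAbs) with hR
  have hslab : ∀ z ∈ Dᶜ, (z ⟨0, hd⟩).natAbs ≤ R := by
    intro z hz
    exact Finset.le_sup (f := fun z => (z ⟨0, hd⟩).natAbs) (hD.mem_toFinset.mpr hz)
  obtain ⟨η, θ, hη0, hηθ, h2η, F, hF0, hFhalf, hFle1, hFmono, hK1, hK2⟩ :=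
    exists_F d R hd α hα0 hα1
  have hθ0 : 0 ≤ θ := le_trans (le_of_lt hη0) hηθ
  set g : (Fin d → ℤ) → ℝ := fun y => F ((y ⟨0, hd⟩).natAbs) with hg
  have hstep := g_step d hd R D hslab F η θ hFmono hK1 hK2
  have hg0 : g 0 ≤ 1 := by
    rw [hg]; dsimp only
    have : ((0 : Fin d → ℤ) ⟨0, hd⟩) = 0 := rfl
    rw [this]
    exact hFle1 _
  have hgpos : ∀ y, 0 < g y := fun y => lt_of_lt_of_le (by norm_num) (hFhalf _)
  have hghalf : ∀ y, 1/2 ≤ g y := fun y => hFhalf _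
  refine ⟨2, by norm_num, η, hη0, ?_⟩
  intro Ω mΩ P hP U hUmeas hUindep hUunif k hk
  set B : Finset (Fin k → Fin (2*d)) := Finset.univ.filter
    (fun v => (1-α)*(k:ℝ) ≤ (((Finset.range k).filter
        (fun j => srw d 0 (extSeed v) j ∈ Dᶜ)).card : ℝ)) with hB
  -- counting bound
  have hT := sum_weight_le d D g θ η hg0 hgpos hstep k
  have hBbound : (B.card : ℝ) ≤ 2 * ((2*d : ℕ) : ℝ)^k * Real.exp (-(η * k)) := by
    have hperv : ∀ v ∈ B, Real.exp (θ * ((1-α)*(k:ℝ))) * (1/2)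
        ≤ Real.exp (θ * (((Finset.range k).filter
            (fun j => srw d 0 (extSeed v) j ∈ Dᶜ)).card : ℝ))
          * g (srw d 0 (extSeed v) k) := by
      intro v hv
      have hvB : (1-α)*(k:ℝ) ≤ (((Finset.range k).filter
          (fun j => srw d 0 (extSeed v) j ∈ Dᶜ)).card : ℝ) := (Finset.mem_filter.1 hv).2
      apply mul_le_mul
      · exact Real.exp_le_exp.2 (mul_le_mul_of_nonneg_left hvB hθ0)
      · exact hghalf _
      · norm_num
      · positivity
    have h1 : (B.card : ℝ) * (Real.exp (θ * ((1-α)*(k:ℝ))) * (1/2))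
        ≤ ((2*d : ℕ) : ℝ)^k * Real.exp (η * k) := by
      calc (B.card : ℝ) * (Real.exp (θ * ((1-α)*(k:ℝ))) * (1/2))
          = ∑ _v ∈ B, Real.exp (θ * ((1-α)*(k:ℝ))) * (1/2) := by
            rw [Finset.sum_const, nsmul_eq_mul]
        _ ≤ ∑ v ∈ B, Real.exp (θ * (((Finset.range k).filter
              (fun j => srw d 0 (extSeed v) j ∈ Dᶜ)).card : ℝ))
            * g (srw d 0 (extSeed v) k) := Finset.sum_le_sum hperv
        _ ≤ ∑ v : Fin k → Fin (2*d), Real.exp (θ * (((Finset.range k).filter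
              (fun j => srw d 0 (extSeed v) j ∈ Dᶜ)).card : ℝ))
            * g (srw d 0 (extSeed v) k) := by
            apply Finset.sum_le_sum_of_subset_of_nonneg (Finset.filter_subset _ _)
            intro v _ _
            exact le_of_lt (mul_pos (Real.exp_pos _) (hgpos _))
        _ ≤ ((2*d : ℕ) : ℝ)^k * Real.exp (η * k) := hT
    have h2 : (B.card : ℝ) * Real.exp (θ * ((1-α)*(k:ℝ)))
        ≤ 2 * (((2*d : ℕ) : ℝ)^k * Real.exp (η * k)) := by linarith
    have h3 : Real.exp (θ * ((1-α)*(k:ℝ))) * Real.exp (-(θ * ((1-α)*(k:ℝ)))) = 1 := by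
      rw [← Real.exp_add]; simp
    have h4 := mul_le_mul_of_nonneg_right h2
      (le_of_lt (Real.exp_pos (-(θ * ((1-α)*(k:ℝ))))))
    rw [mul_assoc, h3, mul_one] at h4
    have h5 : 2 * (((2*d : ℕ) : ℝ)^k * Real.exp (η * k)) * Real.exp (-(θ * ((1-α)*(k:ℝ))))
        = 2 * ((2*d : ℕ) : ℝ)^k * Real.exp (η * k - θ * ((1-α)*(k:ℝ))) := by
      rw [show η * (k:ℝ) - θ * ((1-α)*(k:ℝ))
          = η * (k:ℝ) + -(θ * ((1-α)*(k:ℝ))) by ring, Real.exp_add]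
      ring
    rw [h5] at h4
    have h6 : Real.exp (η * k - θ * ((1-α)*(k:ℝ))) ≤ Real.exp (-(η * k)) := by
      apply Real.exp_le_exp.2
      have hkr : (0:ℝ) ≤ (k:ℝ) := by positivity
      nlinarith [mul_le_mul_of_nonneg_right h2η hkr]
    calc (B.card : ℝ) ≤ 2 * ((2*d : ℕ) : ℝ)^k * Real.exp (η * k - θ * ((1-α)*(k:ℝ))) := h4
      _ ≤ 2 * ((2*d : ℕ) : ℝ)^k * Real.exp (-(η * k)) := by
          apply mul_le_mul_of_nonneg_left h6 (by positivity)
  -- measure part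
  set s : (Fin k → Fin (2*d)) → ℕ → Set Ω := fun v i =>
    if h : i < k then (U i) ⁻¹' {v ⟨i, h⟩} else Set.univ with hs
  have hXeq : ∀ (ω : Ω) (v : Fin k → Fin (2*d)), (∀ i : Fin k, U i ω = v i) →
      ((Finset.range k).filter (fun j => srw d 0 (fun m => ((U m ω : ℕ))) j ∈ Dᶜ))
      = ((Finset.range k).filter (fun j => srw d 0 (extSeed v) j ∈ Dᶜ)) := by
    intro ω v hv
    apply Finset.filter_congr
    intro j hj
    have hjk : j < k := Finset.mem_range.1 hj
    have h1 : srw d 0 (fun m => ((U m ω : ℕ))) j = srw d 0 (extSeed v) j := by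
      apply srw_congr
      intro m hm
      have hmk : m < k := lt_trans hm hjk
      simp only [extSeed, dif_pos hmk]
      rw [hv ⟨m, hmk⟩]
    rw [h1]
  have hEset : {ω | (1-α)*(k:ℝ) ≤ (((Finset.range k).filter
        (fun j => srw d 0 (fun m => (U m ω : ℕ)) j ∈ Dᶜ)).card : ℝ)}
      = ⋃ v ∈ B, ⋂ i ∈ Finset.range k, s v i := by
    ext ω
    simp only [Set.mem_setOf_eq, Set.mem_iUnion, Set.mem_iInter, exists_prop]
    constructor
    · intro hω
      refine ⟨fun i => U i ω, ?_, ?_⟩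
      · rw [hB, Finset.mem_filter]
        refine ⟨Finset.mem_univ _, ?_⟩
        rw [← hXeq ω (fun i => U i ω) (fun i => rfl)]
        exact hω
      · intro i hi
        rw [hs]; dsimp only
        rw [dif_pos (Finset.mem_range.1 hi)]
        exact rfl
    · rintro ⟨v, hvB, hv⟩
      have hv' : ∀ i : Fin k, U i ω = v i := by
        intro i
        have := hv i.1 (Finset.mem_range.2 i.2)
        rw [hs] at this; dsimp only at this
        rw [dif_pos i.2] at this
        have h2 : U i.1 ω = v ⟨i.1, i.2⟩ := this
        simpa using h2
      rw [hXeq ω v hv']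
      exact (Finset.mem_filter.1 hvB).2
  have hmeasC : ∀ v : Fin k → Fin (2*d), MeasurableSet (⋂ i ∈ Finset.range k, s v i) := by
    intro v
    apply MeasurableSet.biInter (Finset.range k).countable_toSet
    intro i _
    rw [hs]; dsimp only
    by_cases hik : i < k
    · rw [dif_pos hik]
      exact (hUmeas i) (measurableSet_singleton _)
    · rw [dif_neg hik]
      exact MeasurableSet.univ
  have hdisj : (↑B : Set (Fin k → Fin (2*d))).PairwiseDisjoint
      (fun v => ⋂ i ∈ Finset.range k, s v i) := by
    intro v1 _ v2 _ hne
    apply Set.disjoint_left.2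
    intro ω hω1 hω2
    apply hne
    funext i
    have e1 := Set.mem_iInter₂.1 hω1 i.1 (Finset.mem_range.2 i.2)
    have e2 := Set.mem_iInter₂.1 hω2 i.1 (Finset.mem_range.2 i.2)
    rw [hs] at e1 e2; dsimp only at e1 e2
    rw [dif_pos i.2] at e1 e2
    have f1 : U i.1 ω = v1 ⟨i.1, i.2⟩ := e1
    have f2 : U i.1 ω = v2 ⟨i.1, i.2⟩ := e2
    have : v1 ⟨i.1, i.2⟩ = v2 ⟨i.1, i.2⟩ := by rw [← f1, f2]
    simpa using this
  have hPC : ∀ v : Fin k → Fin (2*d),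
      P (⋂ i ∈ Finset.range k, s v i) = (((2*d : ℕ) : ℝ≥0∞)⁻¹)^k := by
    intro v
    rw [hUindep.meas_biInter (S := Finset.range k) (s := s v) ?hmeas]
    case hmeas =>
      intro i hi
      rw [hs]; dsimp only
      rw [dif_pos (Finset.mem_range.1 hi)]
      exact ⟨{v ⟨i, Finset.mem_range.1 hi⟩}, measurableSet_singleton _, rfl⟩
    have hterm : ∀ i ∈ Finset.range k, P (s v i) = ((2*d : ℕ) : ℝ≥0∞)⁻¹ := by
      intro i hi
      rw [hs]; dsimp only
      rw [dif_pos (Finset.mem_range.1 hi)]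
      have := hUunif i (v ⟨i, Finset.mem_range.1 hi⟩)
      have heq : (U i) ⁻¹' {v ⟨i, Finset.mem_range.1 hi⟩}
          = {ω | U i ω = v ⟨i, Finset.mem_range.1 hi⟩} := rfl
      rw [heq, this]
    rw [Finset.prod_congr rfl hterm, Finset.prod_const, Finset.card_range]
  rw [hEset, measure_biUnion_finset hdisj (fun v _ => hmeasC v),
    Finset.sum_congr rfl (fun v _ => hPC v), Finset.sum_const, nsmul_eq_mul]
  -- ENNReal conversion
  have h2dpos : (0:ℝ) < ((2*d : ℕ) : ℝ) := by
    have h : (1:ℝ) ≤ (d:ℝ) := by exact_mod_cast hd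
    push_cast
    linarith
  have hofnat : ((2*d : ℕ) : ℝ≥0∞) = ENNReal.ofReal ((2*d : ℕ) : ℝ) :=
    (ENNReal.ofReal_natCast _).symm
  have hinv : ((2*d : ℕ) : ℝ≥0∞)⁻¹ = ENNReal.ofReal (((2*d : ℕ) : ℝ)⁻¹) := by
    rw [hofnat, ← ENNReal.ofReal_inv_of_pos h2dpos]
  have hpowinv : (((2*d : ℕ) : ℝ≥0∞)⁻¹)^k = ENNReal.ofReal ((((2*d : ℕ) : ℝ)⁻¹)^k) := by
    rw [hinv, ← ENNReal.ofReal_pow (by positivity)]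
  have hcardcast : (B.card : ℝ≥0∞) = ENNReal.ofReal (B.card : ℝ) :=
    (ENNReal.ofReal_natCast _).symm
  rw [hcardcast, hpowinv, ← ENNReal.ofReal_mul (by positivity)]
  apply ENNReal.ofReal_le_ofReal
  have hfinal1 : (B.card : ℝ) * (((2*d : ℕ) : ℝ)⁻¹)^k ≤ 2 * Real.exp (-(η * k)) := by
    have hmul := mul_le_mul_of_nonneg_right hBbound
      (by positivity : (0:ℝ) ≤ (((2*d : ℕ) : ℝ)⁻¹)^k)
    have hcancel : ((2*d : ℕ) : ℝ)^k * (((2*d : ℕ) : ℝ)⁻¹)^k = 1 := by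
      rw [← mul_pow, mul_inv_cancel₀ (ne_of_gt h2dpos), one_pow]
    calc (B.card : ℝ) * (((2*d : ℕ) : ℝ)⁻¹)^k
        ≤ 2 * ((2*d : ℕ) : ℝ)^k * Real.exp (-(η * k)) * (((2*d : ℕ) : ℝ)⁻¹)^k := hmul
      _ = 2 * Real.exp (-(η * k)) * (((2*d : ℕ) : ℝ)^k * (((2*d : ℕ) : ℝ)⁻¹)^k) := by ring
      _ = 2 * Real.exp (-(η * k)) := by rw [hcancel, mul_one]
  have hfinal2 : Real.exp (-(η * k)) ≤ Real.exp (-η * (k:ℝ) ^ ((1:ℝ)/4)) := by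
    apply Real.exp_le_exp.2
    have hk1 : (1:ℝ) ≤ (k:ℝ) := by exact_mod_cast hk
    have hrpow : (k:ℝ) ^ ((1:ℝ)/4) ≤ (k:ℝ) := by
      have := Real.rpow_le_rpow_of_exponent_le hk1 (by norm_num : (1:ℝ)/4 ≤ 1)
      rwa [Real.rpow_one] at this
    nlinarith [mul_le_mul_of_nonneg_left hrpow (le_of_lt hη0)]
  linarith [mul_le_mul_of_nonneg_left hfinal2 (by norm_num : (0:ℝ) ≤ 2)]
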